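/- For every integer n ≥ 1 and every positive integer d there exists a nonzero polynomial Q in n real variables of total degree at most d such that every point x of the unit cube [0,1]^n satisfies dist(x, Z(Q)) ≤ 1/d, where Z(Q) = {x ∈ ℝ^n : Q(x) = 0}. In other words, the zero set of a degree-d polynomial can be (1/d)-dense in the unit cube, so the bound in the dense-zero-set theorem is sharp up to constants. -/

import Mathlib

open MvPolynomial

lemma aux_totalDegree_X_sub_C {n : ℕ} (i : Fin n) (c : ℝ) :
    (X i - C c : MvPolynomial (Fin n) ℝ).totalDegree ≤ 1 := by
  rw [sub_eq_add_neg, ← C_neg]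
  refine (totalDegree_add _ _).trans ?_
  simp [totalDegree_X, totalDegree_C]

/-- Sharpness of Wongkew's theorem: for every `n ≥ 1` and every `d ≥ 1` there is a
nonzero polynomial of total degree at most `d` in `n` real variables whose zero set
is `(1/d)`-dense in the unit cube `[0,1]^n`. -/
theorem exists_poly_dense_zero_set
    (n : ℕ) (hn : 1 ≤ n) (d : ℕ) (hd : 0 < d) :
    ∃ Q : MvPolynomial (Fin n) ℝ, Q ≠ 0 ∧ Q.totalDegree ≤ d ∧
      ∀ x : EuclideanSpace ℝ (Fin n), (∀ i, x i ∈ Set.Icc (0 : ℝ) 1) →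
        EMetric.infEdist x
            {y : EuclideanSpace ℝ (Fin n) | MvPolynomial.eval (fun i => y i) Q = 0}
          ≤ ENNReal.ofReal (1 / d) := by
  set i0 : Fin n := ⟨0, hn⟩
  have hd' : (0:ℝ) < d := by exact_mod_cast hd
  refine ⟨∏ k ∈ Finset.range d, (X i0 - C ((k:ℝ)/d)), ?_, ?_, ?_⟩
  · refine Finset.prod_ne_zero_iff.mpr fun k _ h => ?_
    have := congrArg (MvPolynomial.eval (fun _ => (k:ℝ)/d + 1)) h
    simp at this
  · refine (totalDegree_finset_prod _ _).trans ?_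
    refine le_trans (Finset.sum_le_card_nsmul _ _ 1
      fun k _ => aux_totalDegree_X_sub_C i0 _) (by simp)
  · intro x hx
    set t : ℝ := x i0 with ht
    obtain ⟨ht0, ht1⟩ := hx i0
    set k : ℕ := min (⌊t * d⌋₊) (d - 1) with hk
    have hkd : k < d := lt_of_le_of_lt (min_le_right _ _) (Nat.pred_lt hd.ne')
    set c : ℝ := (k:ℝ)/d with hc
    have hcle : c ≤ t := by
      rw [hc, div_le_iff₀ hd']
      calc (k:ℝ) ≤ (⌊t * d⌋₊ : ℝ) := by exact_mod_cast min_le_left _ _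
        _ ≤ t * d := Nat.floor_le (by positivity)
    have htle : t ≤ c + 1/d := by
      rcases le_or_gt (⌊t * d⌋₊) (d - 1) with h | h
      · have hkk : k = ⌊t * d⌋₊ := min_eq_left h
        have h2 : t * d < (k:ℝ) + 1 := by
          rw [hkk]; exact_mod_cast Nat.lt_floor_add_one (t * d)
        rw [hc, ← add_div, le_div_iff₀ hd']
        linarith
      · have hkk : k = d - 1 := min_eq_right h.le
        have : (k:ℝ) + 1 = d := by
          rw [hkk]; push_cast [Nat.cast_sub hd]; ring
        rw [hc, ← add_div, this, div_self hd'.ne']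
        exact ht1
    set y : EuclideanSpace ℝ (Fin n) := WithLp.toLp 2 (Function.update x i0 c) with hy
    have hymem : y ∈ {y : EuclideanSpace ℝ (Fin n) |
        MvPolynomial.eval (fun i => y i) (∏ k ∈ Finset.range d, (X i0 - C ((k:ℝ)/d))) = 0} := by
      simp only [Set.mem_setOf_eq, eval_prod]
      refine Finset.prod_eq_zero (Finset.mem_range.mpr hkd) ?_
      simp [hy, Function.update_self, hc]
    refine (EMetric.infEdist_le_edist_of_mem hymem).trans ?_
    rw [edist_dist]
    refine ENNReal.ofReal_le_ofReal ?_
    have hdist : dist x y = |t - c| := by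
      rw [EuclideanSpace.dist_eq]
      have hsum : ∑ j, dist (x j) (y j) ^ 2
          = ∑ j, if j = i0 then (t - c)^2 else 0 := by
        refine Finset.sum_congr rfl fun j _ => ?_
        by_cases hj : j = i0
        · subst hj; simp [hy, Function.update_self, Real.dist_eq, sq_abs, ht]
        · simp [hy, Function.update_of_ne hj, hj]
      rw [hsum, Finset.sum_ite_eq' Finset.univ i0 (fun _ => (t - c)^2)]
      simp [Real.sqrt_sq_eq_abs]
    rw [hdist, abs_of_nonneg (by linarith)]
    linarith
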